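/- Let M = U Γ Y ᵀ where U = [U_k, Û] ∈ ℝ^{m×n} has orthonormal columns, Γ = diag(Γ_k, Γ̂) is diagonal with nonnegative entries, and Y = [Y_k, Ŷ] ∈ ℝ^{n×n}. Let Y = HT be a QR factorization with H = [H_k, Ĥ] orthonormal and T block upper triangular with blocks T_k, T₁₂, T₂₂. Then M(I − H_k H_kᵀ) = Û Γ̂ T₂₂ᵀ Ĥᵀ, and consequently ‖M(I − H_k H_kᵀ)‖₂ ≤ ‖Γ̂‖₂ · ‖T₂₂‖₂. -/

import Mathlib

open Matrix

/-- Spectral norm (operator 2-norm) of a real matrix. -/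
noncomputable def spec {m n : Type*} [Fintype m] [Fintype n] [DecidableEq m] [DecidableEq n]
    (A : Matrix m n ℝ) : ℝ :=
  ‖LinearMap.toContinuousLinearMap (Matrix.toEuclideanLin A)‖

open scoped Matrix.Norms.L2Operator

lemma spec_eq_l2 {m n : Type*} [Fintype m] [Fintype n] [DecidableEq m] [DecidableEq n]
    (A : Matrix m n ℝ) : spec A = ‖A‖ := rfl

lemma spec_mul_le {l m n : Type*} [Fintype l] [Fintype m] [Fintype n]
    [DecidableEq l] [DecidableEq m] [DecidableEq n]
    (A : Matrix l m ℝ) (B : Matrix m n ℝ) : spec (A * B) ≤ spec A * spec B := by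
  simp only [spec_eq_l2]
  exact Matrix.l2_opNorm_mul A B

lemma conjT_eq_transpose {m n : Type*} (A : Matrix m n ℝ) : Aᴴ = Aᵀ := by
  ext i j; simp [conjTranspose_apply]

lemma spec_transpose {m n : Type*} [Fintype m] [Fintype n] [DecidableEq m] [DecidableEq n]
    (A : Matrix m n ℝ) : spec Aᵀ = spec A := by
  simp only [spec_eq_l2]
  rw [← conjT_eq_transpose]
  exact Matrix.l2_opNorm_conjTranspose A

lemma spec_le_one_of_orth {m n : Type*} [Fintype m] [Fintype n] [DecidableEq m] [DecidableEq n]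
    (A : Matrix m n ℝ) (h : Aᵀ * A = 1) : spec A ≤ 1 := by
  simp only [spec_eq_l2]
  have h1 : ‖(1 : Matrix n n ℝ)‖ ≤ 1 := by
    have := Matrix.l2_opNorm_conjTranspose_mul_self (1 : Matrix n n ℝ)
    rw [conjT_eq_transpose, transpose_one, one_mul] at this
    nlinarith [norm_nonneg (1 : Matrix n n ℝ)]
  have h2 : ‖A‖ * ‖A‖ ≤ 1 := by
    have := Matrix.l2_opNorm_conjTranspose_mul_self A
    rw [conjT_eq_transpose, h] at this
    linarith
  nlinarith [norm_nonneg A]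

/-- with M = U Γ Yᵀ, U = [U_k, Û] orthonormal columns,
Γ = diag(Γ_k, Γ̂) nonnegative diagonal, and QR factorization Y = H T,
one has M (I − H_k H_kᵀ) = Û Γ̂ T₂₂ᵀ Ĥᵀ and
‖M (I − H_k H_kᵀ)‖₂ ≤ ‖Γ̂‖₂ ‖T₂₂‖₂. -/
theorem projected_residual_formula {m n k r : ℕ}
    (Uk : Matrix (Fin m) (Fin k) ℝ) (Uhat : Matrix (Fin m) (Fin r) ℝ)
    (U : Matrix (Fin m) (Fin k ⊕ Fin r) ℝ) (hU : U = fromCols Uk Uhat)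
    (hUorth : Uᵀ * U = 1)
    (gk : Fin k → ℝ) (gh : Fin r → ℝ)
    (hgk : ∀ i, 0 ≤ gk i) (hgh : ∀ i, 0 ≤ gh i)
    (Γ : Matrix (Fin k ⊕ Fin r) (Fin k ⊕ Fin r) ℝ)
    (hΓ : Γ = fromBlocks (Matrix.diagonal gk) 0 0 (Matrix.diagonal gh))
    (Y : Matrix (Fin n) (Fin k ⊕ Fin r) ℝ)
    (Hk : Matrix (Fin n) (Fin k) ℝ) (Hhat : Matrix (Fin n) (Fin r) ℝ)
    (H : Matrix (Fin n) (Fin k ⊕ Fin r) ℝ) (hH : H = fromCols Hk Hhat)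
    (hHorth : Hᵀ * H = 1)
    (Tk : Matrix (Fin k) (Fin k) ℝ) (T12 : Matrix (Fin k) (Fin r) ℝ)
    (T22 : Matrix (Fin r) (Fin r) ℝ)
    (T : Matrix (Fin k ⊕ Fin r) (Fin k ⊕ Fin r) ℝ)
    (hT : T = fromBlocks Tk T12 0 T22)
    (hQR : Y = H * T)
    (M : Matrix (Fin m) (Fin n) ℝ) (hM : M = U * Γ * Yᵀ) :
    M * (1 - Hk * Hkᵀ) = Uhat * Matrix.diagonal gh * T22ᵀ * Hhatᵀ ∧
    spec (M * (1 - Hk * Hkᵀ)) ≤ spec (Matrix.diagonal gh) * spec T22 := by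
  -- orthogonality blocks for H
  have hHblocks : fromBlocks (Hkᵀ * Hk) (Hkᵀ * Hhat) (Hhatᵀ * Hk) (Hhatᵀ * Hhat)
      = fromBlocks (1 : Matrix (Fin k) (Fin k) ℝ) 0 0 (1 : Matrix (Fin r) (Fin r) ℝ) := by
    rw [fromBlocks_one, ← fromRows_mul_fromCols, ← transpose_fromCols, ← hH, hHorth]
  obtain ⟨hkk, hkh, hhk, hhh⟩ := fromBlocks_inj.mp hHblocks
  -- orthogonality blocks for U
  have hUblocks : fromBlocks (Ukᵀ * Uk) (Ukᵀ * Uhat) (Uhatᵀ * Uk) (Uhatᵀ * Uhat)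
      = fromBlocks (1 : Matrix (Fin k) (Fin k) ℝ) 0 0 (1 : Matrix (Fin r) (Fin r) ℝ) := by
    rw [fromBlocks_one, ← fromRows_mul_fromCols, ← transpose_fromCols, ← hU, hUorth]
  obtain ⟨-, -, -, hUhh⟩ := fromBlocks_inj.mp hUblocks
  have hHtHk : Hᵀ * Hk = fromRows (1 : Matrix (Fin k) (Fin k) ℝ) 0 := by
    rw [hH, transpose_fromCols, fromRows_mul, hkk, hhk]
  have key : M * (1 - Hk * Hkᵀ) = Uhat * Matrix.diagonal gh * T22ᵀ * Hhatᵀ := by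
    have hsub : Hᵀ - fromRows (1 : Matrix (Fin k) (Fin k) ℝ) 0 * Hkᵀ
        = fromRows 0 Hhatᵀ := by
      rw [hH, transpose_fromCols, fromRows_mul, Matrix.one_mul, Matrix.zero_mul]
      ext (i | i) j <;> simp
    calc M * (1 - Hk * Hkᵀ)
        = U * Γ * Tᵀ * (Hᵀ - Hᵀ * Hk * Hkᵀ) := by
          simp only [hM, hQR, transpose_mul, Matrix.mul_sub, Matrix.mul_one,
            Matrix.mul_assoc]
      _ = U * ((Γ * Tᵀ * (fromRows 0 Hhatᵀ : Matrix (Fin k ⊕ Fin r) (Fin n) ℝ) :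
            Matrix (Fin k ⊕ Fin r) (Fin n) ℝ)) := by
          rw [hHtHk, hsub]; simp only [Matrix.mul_assoc]
      _ = Uhat * Matrix.diagonal gh * T22ᵀ * Hhatᵀ := by
          rw [hΓ, hT, fromBlocks_transpose, fromBlocks_multiply]
          rw [fromBlocks_mul_fromRows, hU, fromCols_mul_fromRows]
          simp [Matrix.mul_assoc]
  refine ⟨key, ?_⟩
  rw [key]
  have hU1 : spec Uhat ≤ 1 := spec_le_one_of_orth Uhat hUhh
  have hH1 : spec Hhatᵀ ≤ 1 := by
    rw [spec_transpose]
    exact spec_le_one_of_orth Hhat hhh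
  have hT22 : spec T22ᵀ = spec T22 := spec_transpose T22
  have b1 : spec (Uhat * Matrix.diagonal gh * T22ᵀ * Hhatᵀ)
      ≤ spec (Uhat * Matrix.diagonal gh * T22ᵀ) * spec Hhatᵀ := spec_mul_le _ _
  have b2 : spec (Uhat * Matrix.diagonal gh * T22ᵀ)
      ≤ spec (Uhat * Matrix.diagonal gh) * spec T22ᵀ := spec_mul_le _ _
  have b3 : spec (Uhat * Matrix.diagonal gh) ≤ spec Uhat * spec (Matrix.diagonal gh) :=
    spec_mul_le _ _
  have hnn : ∀ {p q : Type} [Fintype p] [Fintype q] [DecidableEq p] [DecidableEq q]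
      (A : Matrix p q ℝ), 0 ≤ spec A := fun A => norm_nonneg _
  calc spec (Uhat * Matrix.diagonal gh * T22ᵀ * Hhatᵀ)
      ≤ spec (Uhat * Matrix.diagonal gh * T22ᵀ) * spec Hhatᵀ := b1
    _ ≤ spec (Uhat * Matrix.diagonal gh * T22ᵀ) * 1 :=
        mul_le_mul_of_nonneg_left hH1 (hnn _)
    _ = spec (Uhat * Matrix.diagonal gh * T22ᵀ) := mul_one _
    _ ≤ spec (Uhat * Matrix.diagonal gh) * spec T22ᵀ := b2
    _ ≤ (spec Uhat * spec (Matrix.diagonal gh)) * spec T22ᵀ :=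
        mul_le_mul_of_nonneg_right b3 (hnn _)
    _ ≤ (1 * spec (Matrix.diagonal gh)) * spec T22ᵀ :=
        mul_le_mul_of_nonneg_right (mul_le_mul_of_nonneg_right hU1 (hnn _)) (hnn _)
    _ = spec (Matrix.diagonal gh) * spec T22 := by rw [one_mul, hT22]
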